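/- arXiv:1910.07034 — 6 statements merged into one kernel-verified Lean document; each statement's English description precedes it below -/
import Mathlib

section
/- Let M ≥ 1 and let ζ, ζ' ∈ kˣ with ζ^M = ζ'^M = 1. Then ω_ζ(a,b,c)·ω_{ζ'}(a,b,c) = ω_{ζζ'}(a,b,c) for all a,b,c ∈ ZMod M; moreover, ω_ζ is a 3-coboundary (i.e., there exists a normalized 2-cochain u : (ZMod M)² → kˣ with ω_ζ(a,b,c) = u(b,c)·u(a+b,c)⁻¹·u(a,b+c)·u(a,b)⁻¹ for all a,b,c) if and only if ζ = 1. -/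
/-- The 3-cocycle `ω_ζ` on `ZMod M` attached to an `M`-th root of unity `ζ`. -/
def omegaZeta {k : Type*} [Field k] (M : ℕ) (ζ : kˣ) (a b c : ZMod M) : kˣ :=
  if M ≤ b.val + c.val then ζ ^ a.val else 1

theorem omegaZeta_mul_and_coboundary_iff
    {k : Type*} [Field k] [IsAlgClosed k] [CharZero k]
    (M : ℕ) (hM : 1 ≤ M) (ζ ζ' : kˣ) (hζ : ζ ^ M = 1) (hζ' : ζ' ^ M = 1) :
    (∀ a b c : ZMod M,
      omegaZeta M ζ a b c * omegaZeta M ζ' a b c = omegaZeta M (ζ * ζ') a b c) ∧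
    ((∃ u : ZMod M → ZMod M → kˣ,
        (∀ a : ZMod M, u a 0 = 1) ∧ (∀ b : ZMod M, u 0 b = 1) ∧
        (∀ a b c : ZMod M,
          omegaZeta M ζ a b c = u b c * (u (a + b) c)⁻¹ * u a (b + c) * (u a b)⁻¹)) ↔
      ζ = 1) := by
  constructor
  · intro a b c
    unfold omegaZeta
    split_ifs with h <;> simp [mul_pow]
  · constructor
    · rintro ⟨u, hu0, h0u, hcob⟩
      rcases eq_or_lt_of_le hM with hM1 | hM2
      · calc ζ = ζ ^ M := by rw [← hM1, pow_one]
        _ = 1 := hζ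
      haveI : NeZero M := ⟨by omega⟩
      haveI : Fact (1 < M) := ⟨hM2⟩
      have hval1 : (1 : ZMod M).val = 1 := ZMod.val_one M
      have hprod1 : ∏ b : ZMod M, omegaZeta M ζ 1 b 1 = 1 := by
        simp_rw [hcob]
        simp only [Finset.prod_mul_distrib, Finset.prod_inv_distrib]
        have e1 : (∏ b : ZMod M, u (1 + b) 1) = ∏ b : ZMod M, u b 1 :=
          Fintype.prod_equiv (Equiv.addLeft 1) _ _ (fun b => rfl)
        have e2 : (∏ b : ZMod M, u 1 (b + 1)) = ∏ b : ZMod M, u 1 b :=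
          Fintype.prod_equiv (Equiv.addRight 1) _ _ (fun b => rfl)
        rw [e1, e2]
        group
      have hprod2 : ∏ b : ZMod M, omegaZeta M ζ 1 b 1 = ζ := by
        rw [Finset.prod_eq_single (((M - 1 : ℕ) : ZMod M))]
        · unfold omegaZeta
          rw [ZMod.val_cast_of_lt (by omega), hval1, if_pos (by omega), pow_one]
        · intro b _ hb
          unfold omegaZeta
          rw [hval1, if_neg]
          have hlt : b.val < M := ZMod.val_lt b
          intro hle
          apply hb
          have hbv : b.val = M - 1 := by omega
          have : ((b.val : ℕ) : ZMod M) = b := ZMod.natCast_zmod_val b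
          rw [← this, hbv]
        · intro h
          exact absurd (Finset.mem_univ _) h
      rw [hprod1] at hprod2
      exact hprod2.symm
    · rintro rfl
      exact ⟨fun _ _ => 1, fun _ => rfl, fun _ => rfl, fun a b c => by
        simp [omegaZeta]⟩
end

section
/- Let M ≥ 1 and let ω : (ZMod M)³ → kˣ be any normalized 3-cocycle. Then there exist a unique ζ ∈ kˣ with ζ^M = 1 and a normalized 2-cochain u : (ZMod M)² → kˣ such that ω(a,b,c) = ω_ζ(a,b,c)·u(b,c)·u(a+b,c)⁻¹·u(a,b+c)·u(a,b)⁻¹ for all a,b,c ∈ ZMod M. (Thus the assignment ζ ↦ [ω_ζ] gives an isomorphism between the group of M-th roots of unity in k and H³(ℤ_M, kˣ).) -/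
open Finset

lemma omegaZeta_eq {k : Type*} [Field k] (M : ℕ) (ξ : kˣ) (a b c : ZMod M) :
    omegaZeta M ξ a b c = ξ ^ (a.val * (if M ≤ b.val + c.val then 1 else 0)) := by
  unfold omegaZeta; split <;> simp

/-- Auxiliary: transfer a product over `ZMod M` to a product over `range M`. -/
lemma zmod_prod_range {M : ℕ} [NeZero M] {G : Type*} [CommMonoid G] (f : ZMod M → G) :
    ∏ j : ZMod M, f j = ∏ i ∈ range M, f (i : ZMod M) :=
  Finset.prod_bij' (fun (a : ZMod M) _ => a.val) (fun i _ => (i : ZMod M))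
    (fun a _ => mem_range.2 (ZMod.val_lt a)) (fun i _ => mem_univ _)
    (fun a _ => ZMod.natCast_rightInverse a)
    (fun i hi => ZMod.val_cast_of_lt (mem_range.1 hi))
    (fun a _ => by rw [ZMod.natCast_rightInverse a])

/-- Auxiliary: counting carries. -/
lemma carry_count (M v : ℕ) (hv : v < M) :
    ∑ i ∈ range M, (if M ≤ i + v then 1 else 0) = v := by
  have h1 : ∑ i ∈ range M, (if M ≤ i + v then 1 else 0)
      = ((range M).filter (fun i => M ≤ i + v)).card := by
    rw [card_eq_sum_ones, sum_filter]
  rw [h1]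
  have h2 : (range M).filter (fun i => M ≤ i + v) = Finset.Ico (M - v) M := by
    ext i; simp only [mem_filter, mem_range, mem_Ico]; omega
  rw [h2, Nat.card_Ico]; omega

/-- Auxiliary: the value of a sum in `ZMod M` with the carry. -/
lemma zmod_val_add' {M : ℕ} [NeZero M] (b c : ZMod M) :
    (b + c).val + M * (if M ≤ b.val + c.val then 1 else 0) = b.val + c.val := by
  have hb := ZMod.val_lt b
  have hc := ZMod.val_lt c
  have hM : 0 < M := Nat.pos_of_ne_zero (NeZero.ne M)
  rw [ZMod.val_add]
  split
  · rw [Nat.mod_eq_sub_mod (by omega), Nat.mod_eq_of_lt (by omega)]; omega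
  · rw [Nat.mod_eq_of_lt (by omega)]; omega

/-- Auxiliary: any normalized 2-cochain coboundary satisfies the 3-cocycle equation. -/
lemma delta_cocycle {G A : Type*} [CommGroup G] [AddCommGroup A] (w : A → A → G)
    (a b c d : A) :
    (w c d * (w (b + c) d)⁻¹ * w b (c + d) * (w b c)⁻¹) *
      (w (b + c) d * (w (a + (b + c)) d)⁻¹ * w a ((b + c) + d) * (w a (b + c))⁻¹) *
      (w b c * (w (a + b) c)⁻¹ * w a (b + c) * (w a b)⁻¹) =
    (w c d * (w ((a + b) + c) d)⁻¹ * w (a + b) (c + d) * (w (a + b) c)⁻¹) *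
      (w b (c + d) * (w (a + b) (c + d))⁻¹ * w a (b + (c + d)) * (w a b)⁻¹) := by
  rw [add_assoc a b c, add_assoc b c d]
  rw [show ∀ x y : G, x = y ↔ Additive.ofMul x = Additive.ofMul y from
    fun _ _ => (Equiv.apply_eq_iff_eq _).symm]
  simp only [ofMul_mul, ofMul_inv]
  abel

theorem normalized_three_cocycle_eq_omegaZeta_mul_coboundary
    {k : Type*} [Field k] [IsAlgClosed k] [CharZero k]
    (M : ℕ) (hM : 1 ≤ M) (ω : ZMod M → ZMod M → ZMod M → kˣ)
    (hnorm : ∀ a b c : ZMod M, a = 0 ∨ b = 0 ∨ c = 0 → ω a b c = 1)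
    (hcoc : ∀ a b c d : ZMod M,
      ω b c d * ω a (b + c) d * ω a b c = ω (a + b) c d * ω a b (c + d)) :
    ∃! ζ : kˣ, ζ ^ M = 1 ∧
      ∃ u : ZMod M → ZMod M → kˣ,
        (∀ a : ZMod M, u a 0 = 1) ∧ (∀ b : ZMod M, u 0 b = 1) ∧
        (∀ a b c : ZMod M,
          ω a b c = omegaZeta M ζ a b c *
            (u b c * (u (a + b) c)⁻¹ * u a (b + c) * (u a b)⁻¹)) := by
  rcases eq_or_lt_of_le hM with hM1 | hM2
  · -- trivial case M = 1
    subst hM1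
    refine ⟨1, ⟨one_pow 1, fun _ _ => 1, fun _ => rfl, fun _ => rfl, ?_⟩, ?_⟩
    · intro a b c
      rw [hnorm a b c (Or.inl (Subsingleton.elim a 0)), omegaZeta_eq]
      simp
    · intro y hy
      simpa using hy.1
  -- main case 1 < M
  haveI : NeZero M := ⟨by omega⟩
  haveI : Fact (1 < M) := ⟨hM2⟩
  have hval1 : (1 : ZMod M).val = 1 := ZMod.val_one M
  set ζ : kˣ := ∏ j : ZMod M, ω 1 j 1 with hζ
  -- the "norm" function G c = ∏_j ω 1 j c is additive
  have hGadd : ∀ c d : ZMod M,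
      (∏ j : ZMod M, ω 1 j (c + d)) = (∏ j : ZMod M, ω 1 j c) * ∏ j : ZMod M, ω 1 j d := by
    intro c d
    have H : ∏ b : ZMod M, (ω b c d * ω 1 (b + c) d * ω 1 b c)
        = ∏ b : ZMod M, (ω (1 + b) c d * ω 1 b (c + d)) :=
      Finset.prod_congr rfl fun b _ => hcoc 1 b c d
    rw [prod_mul_distrib, prod_mul_distrib, prod_mul_distrib] at H
    have h1 : ∏ b : ZMod M, ω (1 + b) c d = ∏ b : ZMod M, ω b c d :=
      Fintype.prod_equiv (Equiv.addLeft (1 : ZMod M)) _ _ (fun b => rfl)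
    have h2 : ∏ b : ZMod M, ω 1 (b + c) d = ∏ b : ZMod M, ω 1 b d :=
      Fintype.prod_equiv (Equiv.addRight c) _ _ (fun b => rfl)
    rw [h1, h2, mul_assoc] at H
    rw [← mul_left_cancel H, mul_comm]
  have hGn : ∀ n : ℕ, (∏ j : ZMod M, ω 1 j ((n : ℕ) : ZMod M)) = ζ ^ n := by
    intro n
    induction n with
    | zero =>
      rw [Nat.cast_zero, pow_zero]
      exact prod_eq_one fun j _ => hnorm _ _ _ (Or.inr (Or.inr rfl))
    | succ n ih =>
      have hc : ((n + 1 : ℕ) : ZMod M) = (n : ZMod M) + 1 := by push_cast; ring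
      rw [hc, hGadd (n : ZMod M) 1, ih, ← hζ, pow_succ]
  have hζM : ζ ^ M = 1 := by
    have h := hGn M
    rw [ZMod.natCast_self] at h
    rw [← h]
    exact prod_eq_one fun j _ => hnorm 1 j 0 (Or.inr (Or.inr rfl))
  have hGval : ∀ c : ZMod M, (∏ j : ZMod M, ω 1 j c) = ζ ^ c.val := by
    intro c
    have h := hGn c.val
    rwa [ZMod.natCast_rightInverse c] at h
  -- the 2-cochain w
  set w : ZMod M → ZMod M → kˣ := fun b c => ∏ i ∈ range b.val,
    (ζ ^ (if M ≤ i + c.val then 1 else 0) * (ω 1 (i : ZMod M) c)⁻¹) with hwdef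
  have hw0 : ∀ b : ZMod M, w 0 b = 1 := by
    intro b; simp [hwdef, ZMod.val_zero]
  have hwz : ∀ a : ZMod M, w a 0 = 1 := by
    intro a
    simp only [hwdef]
    refine prod_eq_one fun i hi => ?_
    have hi' : i < M := (mem_range.1 hi).trans (ZMod.val_lt a)
    rw [ZMod.val_zero, if_neg (by omega), hnorm 1 _ 0 (Or.inr (Or.inr rfl))]
    simp
  have hw1 : ∀ x : ZMod M, w 1 x = 1 := by
    intro x
    have hx := ZMod.val_lt x
    simp only [hwdef, hval1, prod_range_one, Nat.cast_zero, zero_add]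
    rw [if_neg (by omega), hnorm 1 0 x (Or.inr (Or.inl rfl))]
    simp
  have hwrap : ∀ c : ZMod M,
      ∏ i ∈ range M, (ζ ^ (if M ≤ i + c.val then 1 else 0) * (ω 1 (i : ZMod M) c)⁻¹) = 1 := by
    intro c
    rw [prod_mul_distrib, prod_inv_distrib]
    have c1 : ∏ i ∈ range M, ζ ^ (if M ≤ i + c.val then 1 else 0) = ζ ^ c.val := by
      rw [prod_pow_eq_pow_sum, carry_count M c.val (ZMod.val_lt c)]
    have c2 : ∏ i ∈ range M, ω 1 (i : ZMod M) c = ζ ^ c.val := by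
      rw [← zmod_prod_range (fun j => ω 1 j c)]
      exact hGval c
    rw [c1, c2]
    simp
  have hstep : ∀ b c : ZMod M,
      w (1 + b) c = (ζ ^ (if M ≤ b.val + c.val then 1 else 0) * (ω 1 b c)⁻¹) * w b c := by
    intro b c
    have hb := ZMod.val_lt b
    rcases lt_or_eq_of_le (Nat.succ_le_of_lt hb) with h | h
    · -- no wrap-around
      have hv : (1 + b).val = b.val + 1 := by
        rw [ZMod.val_add, hval1, Nat.mod_eq_of_lt (by omega)]; omega
      simp only [hwdef, hv]
      rw [prod_range_succ, ZMod.natCast_rightInverse b, mul_comm]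
    · -- wrap-around: 1 + b = 0
      have h0 : (1 : ZMod M) + b = 0 := by
        rw [← ZMod.val_eq_zero, ZMod.val_add, hval1,
          show 1 + b.val = M from by omega, Nat.mod_self]
      have hM' : range M = range (b.val + 1) := by
        rw [show b.val + 1 = M from by omega]
      rw [h0, hw0]
      have hkey : (ζ ^ (if M ≤ b.val + c.val then 1 else 0) * (ω 1 b c)⁻¹) * w b c
          = ∏ i ∈ range M, (ζ ^ (if M ≤ i + c.val then 1 else 0) * (ω 1 (i : ZMod M) c)⁻¹) := by
        simp only [hwdef]
        rw [hM', prod_range_succ, ZMod.natCast_rightInverse b, mul_comm]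
      rw [hkey, hwrap]
  -- the key identity at first argument 1
  have hKA : ∀ b c : ZMod M,
      ω 1 b c = omegaZeta M ζ 1 b c *
        (w b c * (w (1 + b) c)⁻¹ * w 1 (b + c) * (w 1 b)⁻¹) := by
    intro b c
    rw [omegaZeta_eq, hval1, one_mul, hw1, hw1, hstep b c, inv_one, mul_one, mul_one]
    rw [show ∀ x y : kˣ, x = y ↔ Additive.ofMul x = Additive.ofMul y from
      fun _ _ => (Equiv.apply_eq_iff_eq _).symm]
    simp only [ofMul_mul, ofMul_inv]
    abel
  -- omegaZeta is a cocycle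
  have hOZcoc : ∀ a b c d : ZMod M,
      omegaZeta M ζ b c d * omegaZeta M ζ a (b + c) d * omegaZeta M ζ a b c
        = omegaZeta M ζ (a + b) c d * omegaZeta M ζ a b (c + d) := by
    intro a b c d
    simp only [omegaZeta_eq]
    rw [← pow_add, ← pow_add]
    have h1 := zmod_val_add' a b
    have h2 := zmod_val_add' b c
    have h3 := zmod_val_add' c d
    have h4 := zmod_val_add' (b + c) d
    have h5 := zmod_val_add' b (c + d)
    have h6 : ((b + c) + d).val = (b + (c + d)).val := by rw [add_assoc]
    have key : b.val * (if M ≤ c.val + d.val then 1 else 0)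
          + a.val * (if M ≤ (b + c).val + d.val then 1 else 0)
          + a.val * (if M ≤ b.val + c.val then 1 else 0)
        = ((a + b).val * (if M ≤ c.val + d.val then 1 else 0)
            + a.val * (if M ≤ b.val + (c + d).val then 1 else 0))
          + M * ((if M ≤ a.val + b.val then 1 else 0)
            * (if M ≤ c.val + d.val then 1 else 0)) := by
      split_ifs at h1 h2 h3 h4 h5 ⊢ <;> omega
    rw [key, pow_add, pow_mul, hζM, one_pow, mul_one, pow_add]
  -- the main identity, by induction on the first argument
  have main : ∀ n : ℕ, ∀ b c : ZMod M,
      ω ((n : ℕ) : ZMod M) b c = omegaZeta M ζ ((n : ℕ) : ZMod M) b c *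
        (w b c * (w (((n : ℕ) : ZMod M) + b) c)⁻¹ * w ((n : ℕ) : ZMod M) (b + c)
          * (w ((n : ℕ) : ZMod M) b)⁻¹) := by
    intro n
    induction n with
    | zero =>
      intro b c
      rw [Nat.cast_zero, hnorm 0 b c (Or.inl rfl), omegaZeta_eq, hw0, hw0, zero_add]
      simp [ZMod.val_zero]
    | succ n ih =>
      intro b c
      rw [show ((n + 1 : ℕ) : ZMod M) = 1 + (n : ZMod M) by push_cast; ring]
      have H1 := hcoc 1 ((n : ℕ) : ZMod M) b c
      have H2 := hOZcoc 1 ((n : ℕ) : ZMod M) b c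
      have H3 := delta_cocycle w 1 ((n : ℕ) : ZMod M) b c
      apply mul_right_cancel (b := ω 1 ((n : ℕ) : ZMod M) (b + c))
      rw [← H1]
      conv_rhs => rw [hKA ((n : ℕ) : ZMod M) (b + c)]
      rw [ih, hKA (((n : ℕ) : ZMod M) + b) c, hKA ((n : ℕ) : ZMod M) b]
      conv_rhs => rw [mul_mul_mul_comm]
      rw [← H2, ← H3]
      rw [show ∀ x y : kˣ, x = y ↔ Additive.ofMul x = Additive.ofMul y from
        fun _ _ => (Equiv.apply_eq_iff_eq _).symm]
      simp only [ofMul_mul, ofMul_inv]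
      abel
  refine ⟨ζ, ⟨hζM, w, hwz, hw0, ?_⟩, ?_⟩
  · intro a b c
    have h := main a.val b c
    rwa [ZMod.natCast_rightInverse a] at h
  · -- uniqueness
    rintro ξ ⟨hξM, u', hu'1, hu'2, hu'3⟩
    have key : ∏ j : ZMod M, ω 1 j 1 = ξ := by
      calc ∏ j : ZMod M, ω 1 j 1
          = ∏ j : ZMod M, (omegaZeta M ξ 1 j 1 *
              (u' j 1 * (u' (1 + j) 1)⁻¹ * u' 1 (j + 1) * (u' 1 j)⁻¹)) :=
            Finset.prod_congr rfl fun j _ => hu'3 1 j 1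
        _ = (∏ j : ZMod M, omegaZeta M ξ 1 j 1) *
              ((∏ j : ZMod M, u' j 1) * (∏ j : ZMod M, u' (1 + j) 1)⁻¹ *
                (∏ j : ZMod M, u' 1 (j + 1)) * (∏ j : ZMod M, u' 1 j)⁻¹) := by
            rw [prod_mul_distrib, prod_mul_distrib, prod_mul_distrib, prod_mul_distrib,
              prod_inv_distrib, prod_inv_distrib]
        _ = ∏ j : ZMod M, omegaZeta M ξ 1 j 1 := by
            rw [Fintype.prod_equiv (Equiv.addLeft (1 : ZMod M))
                (fun j => u' (1 + j) 1) (fun j => u' j 1) (fun j => rfl),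
              Fintype.prod_equiv (Equiv.addRight (1 : ZMod M))
                (fun j => u' 1 (j + 1)) (fun j => u' 1 j) (fun j => rfl)]
            simp
        _ = ∏ i ∈ range M, omegaZeta M ξ 1 (i : ZMod M) 1 :=
            zmod_prod_range (fun j => omegaZeta M ξ 1 j 1)
        _ = ∏ i ∈ range M, ξ ^ (if M ≤ i + 1 then 1 else 0) := by
            refine prod_congr rfl fun i hi => ?_
            rw [omegaZeta_eq, hval1, ZMod.val_cast_of_lt (mem_range.1 hi), one_mul]
        _ = ξ ^ (∑ i ∈ range M, if M ≤ i + 1 then 1 else 0) :=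
            prod_pow_eq_pow_sum _ _ _
        _ = ξ ^ 1 := by rw [carry_count M 1 hM2]
        _ = ξ := pow_one ξ
    rw [hζ]
    exact key.symm
end

section
/- There is an isomorphism of abelian groups between the third group cohomology of the cyclic group ZMod M (M ≥ 1) with coefficients in the trivial representation on Additive kˣ and the group ZMod M itself; that is, H³(ZMod M, kˣ) ≅ ℤ/Mℤ when kˣ carries the trivial ZMod M-action. -/
noncomputable section
open CategoryTheory Limits Representation

namespace myH3

variable {k G : Type} [CommRing k] [Group G] (A : Rep.{0} k G)

open groupCohomology

/-- The 4th object in the complex of inhomogeneous cochains is `Fun(G⁴, A)`. -/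
def fourCochainsLequiv : (inhomogeneousCochains A).X 4 ≃ₗ[k] G × G × G × G → A :=
  LinearEquiv.funCongrLeft k A <| ((Fin.consEquiv fun _ => G).symm.trans
    ((Equiv.refl G).prodCongr <| (Fin.consEquiv fun _ => G).symm.trans
      ((Equiv.refl G).prodCongr (piFinTwoEquiv fun _ => G)))).symm

@[simps]
def dThree : (G × G × G → A) →ₗ[k] G × G × G × G → A where
  toFun f g :=
    A.ρ g.1 (f (g.2.1, g.2.2.1, g.2.2.2)) - f (g.1 * g.2.1, g.2.2.1, g.2.2.2)
      + f (g.1, g.2.1 * g.2.2.1, g.2.2.2) - f (g.1, g.2.1, g.2.2.1 * g.2.2.2)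
      + f (g.1, g.2.1, g.2.2.1)
  map_add' x y := by
    funext g
    dsimp
    rw [map_add]
    abel
  map_smul' r x := by
    funext g
    dsimp
    rw [map_smul]
    simp only [smul_add, smul_sub]

theorem dThree_comp_eq : (cochainsIso₃ A).hom ≫ ModuleCat.ofHom (dThree A)
    = (inhomogeneousCochains A).d 3 4 ≫ ((fourCochainsLequiv A).toModuleIso :
      (inhomogeneousCochains A).X 4 ≅ ModuleCat.of k (G × G × G × G → A)).hom := by
  ext x y
  change A.ρ y.1 (x _) - x _ + x _ - x _ + x _ = _ + _
  dsimp
  rw [Fin.sum_univ_four]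
  simp only [Fin.val_zero, Fin.val_one, Fin.val_two, show ((3 : Fin 4) : ℕ) = 3 from rfl,
    pow_succ, pow_zero, one_mul, neg_mul, mul_neg, neg_neg, mul_one, one_smul, neg_smul,
    sub_eq_add_neg, add_assoc]
  rcongr i <;> fin_cases i <;> rfl



theorem dThree_comp_dTwo : dThree A ∘ₗ (d₂₃ A).hom = 0 := by
  show (d₂₃ A ≫ ModuleCat.ofHom (dThree A)).hom = (0 : ModuleCat.of k (G × G → A) ⟶ _).hom
  congr 1
  have h2 := comp_d₂₃_eq A
  have h3 := dThree_comp_eq A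
  rw [(Iso.eq_inv_comp _).2 h2]
  rw [Category.assoc, Category.assoc, h3, HomologicalComplex.d_comp_d_assoc, zero_comp, comp_zero]

/-- The short complex `Fun(G², A) --dTwo--> Fun(G³, A) --dThree--> Fun(G⁴, A)`. -/
def shortComplexH3 : ShortComplex (ModuleCat k) :=
  ShortComplex.moduleCatMk (d₂₃ A).hom (dThree A) (dThree_comp_dTwo A)

def shortComplexH3Iso : (inhomogeneousCochains A).sc' 2 3 4 ≅ shortComplexH3 A :=
  ShortComplex.isoMk (cochainsIso₂ A) (cochainsIso₃ A)
    ((fourCochainsLequiv A).toModuleIso :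
      (inhomogeneousCochains A).X 4 ≅ ModuleCat.of k (G × G × G × G → A))
    (comp_d₂₃_eq A) (dThree_comp_eq A)

def isoH3 : groupCohomology A 3 ≅ (shortComplexH3 A).moduleCatLeftHomologyData.H :=
  (inhomogeneousCochains A).homologyIsoSc' _ _ _ (by aesop) (by aesop) ≪≫
    ShortComplex.homologyMapIso (shortComplexH3Iso A) ≪≫
      (shortComplexH3 A).moduleCatHomologyIso

end myH3


def modCatIsoToAddEquiv {X Y : ModuleCat ℤ} (e : X ≅ Y) : X ≃+ Y where
  toFun := e.hom
  invFun := e.inv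
  left_inv x := by
    show (e.hom ≫ e.inv) x = x
    rw [e.hom_inv_id]; rfl
  right_inv x := by
    show (e.inv ≫ e.hom) x = x
    rw [e.inv_hom_id]; rfl
  map_add' := map_add e.hom.hom



namespace cyc

variable {M : ℕ} [NeZero M]

abbrev Gc (M : ℕ) := Multiplicative (ZMod M)

def σ : Gc M := Multiplicative.ofAdd 1

def nv (x : Gc M) : ℕ := (Multiplicative.toAdd x).val

lemma nv_lt (x : Gc M) : nv x < M := ZMod.val_lt _

lemma σ_pow (n : ℕ) : (σ : Gc M) ^ n = Multiplicative.ofAdd (n : ZMod M) := by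
  induction n with
  | zero =>
    rw [pow_zero, Nat.cast_zero]
    rfl
  | succ n ih =>
    rw [pow_succ, ih, Nat.cast_succ]
    rfl

lemma σ_pow_nv (x : Gc M) : (σ : Gc M) ^ (nv x) = x := by
  rw [σ_pow, nv, ZMod.natCast_val, ZMod.cast_id]
  rfl

lemma σ_pow_M : (σ : Gc M) ^ M = 1 := by
  rw [σ_pow, ZMod.natCast_self]
  rfl

lemma σ_pow_period (j : ℕ) : (σ : Gc M) ^ (j + M) = σ ^ j := by
  rw [pow_add, σ_pow_M, mul_one]

lemma nv_mul_carry (x y : Gc M) :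
    nv x + nv y = nv (x * y) + M * (if M ≤ nv x + nv y then 1 else 0) := by
  have h1 : nv (x * y) = (nv x + nv y) % M := ZMod.val_add _ _
  have h2 : nv x < M := nv_lt x
  have h3 : nv y < M := nv_lt y
  by_cases h : M ≤ nv x + nv y
  · rw [if_pos h, h1, Nat.mod_eq_sub_mod h, Nat.mod_eq_of_lt (by omega)]
    omega
  · rw [if_neg h, h1, Nat.mod_eq_of_lt (by omega)]
    omega

section sums
variable {W : Type} [AddCommGroup W]

lemma sum_shift_one (g : ℕ → W) (hg : ∀ j, g (j + M) = g j) :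
    ∑ j ∈ Finset.range M, g (j + 1) = ∑ j ∈ Finset.range M, g j := by
  have h1 := Finset.sum_range_succ' g M
  have h2 := Finset.sum_range_succ g M
  rw [h1] at h2
  have : g M = g 0 := by simpa using hg 0
  rw [this] at h2
  exact add_right_cancel h2

lemma sum_shift (g : ℕ → W) (hg : ∀ j, g (j + M) = g j) (t : ℕ) :
    ∑ j ∈ Finset.range M, g (t + j) = ∑ j ∈ Finset.range M, g j := by
  induction t with
  | zero => simp
  | succ t ih =>
    have h := sum_shift_one (fun j => g (t + j)) (fun j => by
      simpa [← add_assoc] using hg (t + j))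
    calc ∑ j ∈ Finset.range M, g (t + 1 + j)
        = ∑ j ∈ Finset.range M, g (t + (j + 1)) := by
          apply Finset.sum_congr rfl; intro j _; ring_nf
      _ = ∑ j ∈ Finset.range M, g (t + j) := h
      _ = _ := ih

lemma partial_shift (g : ℕ → W) (hg : ∀ j, g (j + M) = g j) (b c : Gc M) :
    ∑ j ∈ Finset.range (nv c), g (nv b + j)
      = ∑ j ∈ Finset.range (nv (b * c)), g j - ∑ j ∈ Finset.range (nv b), g j
        + (if M ≤ nv b + nv c then ∑ j ∈ Finset.range M, g j else 0) := by
  have key : ∑ j ∈ Finset.range (nv c), g (nv b + j)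
      = ∑ j ∈ Finset.Ico (nv b) (nv b + nv c), g j := by
    rw [Finset.sum_Ico_eq_sum_range]
    simp
  have hcar := nv_mul_carry b c
  by_cases h : M ≤ nv b + nv c
  · rw [if_pos h] at hcar ⊢
    have hbc : nv (b * c) + M = nv b + nv c := by omega
    have e1 : ∑ j ∈ Finset.Ico (nv b) (nv b + nv c), g j
        = ∑ j ∈ Finset.range (nv b + nv c), g j - ∑ j ∈ Finset.range (nv b), g j :=
      Finset.sum_Ico_eq_sub _ (by omega)
    have e2 : ∑ j ∈ Finset.Ico M (nv b + nv c), g j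
        = ∑ j ∈ Finset.range (nv b + nv c), g j - ∑ j ∈ Finset.range M, g j :=
      Finset.sum_Ico_eq_sub _ (by omega)
    have e3 : ∑ j ∈ Finset.Ico M (nv b + nv c), g j
        = ∑ j ∈ Finset.range (nv (b * c)), g j := by
      rw [Finset.sum_Ico_eq_sum_range]
      have : nv b + nv c - M = nv (b * c) := by omega
      rw [this]
      apply Finset.sum_congr rfl
      intro j _
      rw [add_comm M j, hg j]
    rw [key, e1, ← e3, e2]
    abel
  · rw [if_neg h] at hcar ⊢
    have hbc : nv (b * c) = nv b + nv c := by omega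
    rw [key, Finset.sum_Ico_eq_sub _ (by omega : nv b ≤ nv b + nv c), hbc]
    abel

lemma sum_telescope (h : ℕ → W) (n : ℕ) :
    ∑ j ∈ Finset.range n, (h (j + 1) - h j) = h n - h 0 :=
  Finset.sum_range_sub h n

end sums


section coc
variable {W : Type} [AddCommGroup W]

/-- The inhomogeneous 3-cocycle condition for trivial action. -/
def IsCoc (F : Gc M × Gc M × Gc M → W) : Prop :=
  ∀ a b c e : Gc M,
    F (b,c,e) - F (a*b,c,e) + F (a,b*c,e) - F (a,b,c*e) + F (a,b,c) = 0

/-- The trivial-action 2-coboundary of `P`. -/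
def d2 (P : Gc M × Gc M → W) : Gc M × Gc M × Gc M → W :=
  fun t => P (t.2.1, t.2.2) - P (t.1 * t.2.1, t.2.2) + P (t.1, t.2.1 * t.2.2) - P (t.1, t.2.1)

def Sf (F : Gc M × Gc M × Gc M → W) (a : Gc M) : W :=
  ∑ j ∈ Finset.range M, F (a, σ ^ j, σ)

lemma Sf_mul {F : Gc M × Gc M × Gc M → W} (hF : IsCoc F) (a b : Gc M) :
    Sf F (a * b) = Sf F a + Sf F b := by
  have h0 : ∑ j ∈ Finset.range M,
      (F (b, σ^j, σ) - F (a*b, σ^j, σ) + F (a, b*σ^j, σ)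
        - F (a,b,σ^j*σ) + F (a,b,σ^j)) = 0 :=
    Finset.sum_eq_zero fun j _ => hF a b (σ^j) σ
  have hsplit : Sf F b - Sf F (a*b) + (∑ j ∈ Finset.range M, F (a, b*σ^j, σ))
      - (∑ j ∈ Finset.range M, F (a,b,σ^j*σ))
      + (∑ j ∈ Finset.range M, F (a,b,σ^j)) = 0 := by
    rw [Sf, Sf, ← h0, Finset.sum_add_distrib, Finset.sum_sub_distrib,
      Finset.sum_add_distrib, Finset.sum_sub_distrib]
  have h1 : (∑ j ∈ Finset.range M, F (a, b*σ^j, σ)) = Sf F a := by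
    calc ∑ j ∈ Finset.range M, F (a, b*σ^j, σ)
        = ∑ j ∈ Finset.range M, F (a, σ^(nv b + j), σ) := by
          apply Finset.sum_congr rfl; intro j _; rw [pow_add, σ_pow_nv]
      _ = Sf F a := sum_shift (fun j => F (a, σ^j, σ))
          (fun j => by rw [σ_pow_period]) (nv b)
  have h2 : (∑ j ∈ Finset.range M, F (a,b,σ^j*σ))
      = ∑ j ∈ Finset.range M, F (a,b,σ^j) := by
    calc ∑ j ∈ Finset.range M, F (a,b,σ^j*σ)
        = ∑ j ∈ Finset.range M, F (a,b,σ^(j+1)) := by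
          apply Finset.sum_congr rfl; intro j _; rw [pow_succ]
      _ = _ := sum_shift_one (fun j => F (a,b,σ^j)) (fun j => by rw [σ_pow_period])
  rw [h1, h2] at hsplit
  refine eq_of_sub_eq_zero ?_
  calc Sf F (a*b) - (Sf F a + Sf F b)
      = -(Sf F b - Sf F (a*b) + Sf F a
        - (∑ j ∈ Finset.range M, F (a,b,σ^j))
        + (∑ j ∈ Finset.range M, F (a,b,σ^j))) := by abel
    _ = 0 := by rw [hsplit, neg_zero]

lemma Sf_one {F : Gc M × Gc M × Gc M → W} (hF : IsCoc F) : Sf F 1 = 0 := by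
  have := Sf_mul hF 1 1
  rw [one_mul] at this
  exact (left_eq_add.mp this)

lemma Sf_pow {F : Gc M × Gc M × Gc M → W} (hF : IsCoc F) (n : ℕ) :
    Sf F ((σ : Gc M) ^ n) = n • Sf F σ := by
  induction n with
  | zero => rw [pow_zero, Sf_one hF, zero_smul]
  | succ n ih => rw [pow_succ, Sf_mul hF, ih, succ_nsmul]

lemma Sf_eq {F : Gc M × Gc M × Gc M → W} (hF : IsCoc F) (a : Gc M) :
    Sf F a = nv a • Sf F σ := by
  conv_lhs => rw [← σ_pow_nv a]
  rw [Sf_pow hF]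

lemma Sf_torsion {F : Gc M × Gc M × Gc M → W} (hF : IsCoc F) :
    M • Sf F σ = 0 := by
  rw [← Sf_pow hF, σ_pow_M, Sf_one hF]

lemma Sf_d2 (P : Gc M × Gc M → W) : Sf (d2 P) σ = 0 := by
  have h1 : (∑ j ∈ Finset.range M, P ((σ : Gc M) * σ^j, σ))
      = ∑ j ∈ Finset.range M, P ((σ : Gc M)^j, σ) := by
    calc ∑ j ∈ Finset.range M, P ((σ : Gc M) * σ^j, σ)
        = ∑ j ∈ Finset.range M, P ((σ : Gc M)^(1 + j), σ) := by
          apply Finset.sum_congr rfl; intro j _; rw [pow_add, pow_one]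
      _ = _ := sum_shift (fun j => P ((σ : Gc M)^j, σ))
          (fun j => by rw [σ_pow_period]) 1
  have h2 : (∑ j ∈ Finset.range M, P ((σ : Gc M), σ^j * σ))
      = ∑ j ∈ Finset.range M, P ((σ : Gc M), σ^j) := by
    calc ∑ j ∈ Finset.range M, P ((σ : Gc M), σ^j * σ)
        = ∑ j ∈ Finset.range M, P ((σ : Gc M), σ^(j+1)) := by
          apply Finset.sum_congr rfl; intro j _; rw [pow_succ]
      _ = _ := sum_shift_one (fun j => P ((σ : Gc M), σ^j))
          (fun j => by rw [σ_pow_period])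
  calc Sf (d2 P) σ
      = (∑ j ∈ Finset.range M, P ((σ : Gc M)^j, σ))
        - (∑ j ∈ Finset.range M, P ((σ : Gc M) * σ^j, σ))
        + (∑ j ∈ Finset.range M, P ((σ : Gc M), σ^j * σ))
        - (∑ j ∈ Finset.range M, P ((σ : Gc M), σ^j)) := by
        rw [Sf]
        simp only [d2]
        rw [Finset.sum_sub_distrib, Finset.sum_add_distrib, Finset.sum_sub_distrib]
    _ = 0 := by rw [h1, h2]; abel

end coc

section std
variable {W : Type} [AddCommGroup W]

def ccz (y z : Gc M) : ℤ := if M ≤ nv y + nv z then 1 else 0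

lemma hccz (y z : Gc M) :
    (nv y : ℤ) + nv z = nv (y * z) + M * ccz y z := by
  have h := nv_mul_carry y z
  by_cases hc : M ≤ nv y + nv z
  · rw [if_pos hc] at h
    rw [ccz, if_pos hc]
    exact_mod_cast congrArg (Nat.cast : ℕ → ℤ) h
  · rw [if_neg hc] at h
    rw [ccz, if_neg hc]
    exact_mod_cast congrArg (Nat.cast : ℕ → ℤ) h

/-- The standard 3-cocycle attached to an `M`-torsion element `a`. -/
def stdc (a : W) : Gc M × Gc M × Gc M → W :=
  fun t => ((nv t.1 : ℤ) * ccz t.2.1 t.2.2) • a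

lemma stdc_isCoc {a : W} (ha : (M : ℤ) • a = 0) : IsCoc (stdc (M := M) a) := by
  intro w x y z
  show ((nv x : ℤ) * ccz y z) • a - ((nv (w*x) : ℤ) * ccz y z) • a
      + ((nv w : ℤ) * ccz (x*y) z) • a - ((nv w : ℤ) * ccz x (y*z)) • a
      + ((nv w : ℤ) * ccz x y) • a = 0
  have hcomb : ((nv x : ℤ) * ccz y z) • a - ((nv (w*x) : ℤ) * ccz y z) • a
      + ((nv w : ℤ) * ccz (x*y) z) • a - ((nv w : ℤ) * ccz x (y*z)) • a
      + ((nv w : ℤ) * ccz x y) • a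
      = ((nv x : ℤ) * ccz y z - (nv (w*x) : ℤ) * ccz y z
        + (nv w : ℤ) * ccz (x*y) z - (nv w : ℤ) * ccz x (y*z)
        + (nv w : ℤ) * ccz x y) • a := by
    rw [add_smul, sub_smul, add_smul, sub_smul]
  rw [hcomb]
  have h1 := hccz w x
  have h2 := hccz x y
  have h3 := hccz (x*y) z
  have h4 := hccz y z
  have h5 := hccz x (y*z)
  have hassoc : nv (x*y*z) = nv (x*(y*z)) := by rw [mul_assoc]
  have hassoc' : ((nv (x*y*z) : ℕ) : ℤ) = ((nv (x*(y*z)) : ℕ) : ℤ) := by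
    exact_mod_cast congrArg (Nat.cast : ℕ → ℤ) hassoc
  have hMne : (M : ℤ) ≠ 0 := by exact_mod_cast (NeZero.ne M)
  have hbr : ccz x y + ccz (x*y) z = ccz y z + ccz x (y*z) := by
    apply mul_left_cancel₀ hMne
    linear_combination -h2 - h3 + h4 + h5 - hassoc'
  have key : (nv x : ℤ) * ccz y z - (nv (w*x) : ℤ) * ccz y z
        + (nv w : ℤ) * ccz (x*y) z - (nv w : ℤ) * ccz x (y*z)
        + (nv w : ℤ) * ccz x y
      = (M : ℤ) * (ccz w x * ccz y z) := by
    linear_combination (ccz y z) * h1 + (nv w : ℤ) * hbr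
  rw [key, mul_comm, mul_smul, ha, smul_zero]

lemma sum_ccz : (∑ j ∈ Finset.range M, ccz ((σ : Gc M)^j) σ) = (nv (σ : Gc M) : ℤ) := by
  have hM : (M : ℤ) ≠ 0 := by exact_mod_cast (NeZero.ne M)
  apply mul_left_cancel₀ hM
  have hs : ∑ j ∈ Finset.range M, ((nv ((σ : Gc M)^j) : ℤ) + nv (σ : Gc M))
      = ∑ j ∈ Finset.range M, ((nv ((σ : Gc M)^j * σ) : ℤ) + M * ccz ((σ : Gc M)^j) σ) :=
    Finset.sum_congr rfl fun j _ => hccz _ _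
  have hshift : ∑ j ∈ Finset.range M, (nv ((σ : Gc M)^j * σ) : ℤ)
      = ∑ j ∈ Finset.range M, (nv ((σ : Gc M)^j) : ℤ) := by
    calc ∑ j ∈ Finset.range M, (nv ((σ : Gc M)^j * σ) : ℤ)
        = ∑ j ∈ Finset.range M, (nv ((σ : Gc M)^(j+1)) : ℤ) := by
          apply Finset.sum_congr rfl; intro j _; rw [pow_succ]
      _ = _ := sum_shift_one (fun j => (nv ((σ : Gc M)^j) : ℤ))
          (fun j => by rw [σ_pow_period])
  rw [Finset.sum_add_distrib, Finset.sum_add_distrib, hshift, ← Finset.mul_sum] at hs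
  simp only [Finset.sum_const, Finset.card_range, nsmul_eq_mul] at hs
  linarith

lemma stdc_Sf {a : W} (ha : (M : ℤ) • a = 0) : Sf (stdc (M := M) a) σ = a := by
  have h1 : Sf (stdc (M := M) a) σ
      = ((nv (σ : Gc M) : ℤ) * (nv (σ : Gc M) : ℤ)) • a := by
    rw [Sf]
    show (∑ j ∈ Finset.range M, ((nv (σ : Gc M) : ℤ) * ccz ((σ:Gc M)^j) σ) • a) = _
    rw [← Finset.sum_smul, ← Finset.mul_sum, sum_ccz]
  rw [h1]
  rcases eq_or_lt_of_le (Nat.one_le_iff_ne_zero.mpr (NeZero.ne M)) with hM1 | hM1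
  · have ha0 : a = 0 := by
      have : ((1:ℕ) : ℤ) • a = 0 := by rw [← hM1] at ha; exact_mod_cast ha
      simpa using this
    rw [ha0, smul_zero]
  · have : nv (σ : Gc M) = 1 := by
      show (Multiplicative.toAdd (Multiplicative.ofAdd (1 : ZMod M))).val = 1
      rw [toAdd_ofAdd]
      exact ZMod.val_one_eq_one_mod M ▸ Nat.mod_eq_of_lt hM1
    rw [this]
    norm_num

lemma exists_d2 {F : Gc M × Gc M × Gc M → W} (hF : IsCoc F) (hS : Sf F σ = 0) :
    ∃ P : Gc M × Gc M → W, d2 P = F := by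
  have hSa : ∀ a : Gc M, Sf F a = 0 := fun a => by rw [Sf_eq hF, hS, smul_zero]
  set Q : Gc M → Gc M → W := fun x y => ∑ j ∈ Finset.range (nv y), F (x, σ^j, σ) with hQ
  refine ⟨fun t => Q t.1 t.2 - F (t.1, 1, 1), ?_⟩
  funext t
  obtain ⟨a, b, c⟩ := t
  show Q b c - F (b,1,1) - (Q (a*b) c - F (a*b,1,1))
      + (Q a (b*c) - F (a,1,1)) - (Q a b - F (a,1,1)) = F (a,b,c)
  have h0 : ∑ j ∈ Finset.range (nv c),
      (F (b, σ^j, σ) - F (a*b, σ^j, σ) + F (a, b*σ^j, σ)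
        - F (a,b,σ^j*σ) + F (a,b,σ^j)) = 0 :=
    Finset.sum_eq_zero fun j _ => hF a b (σ^j) σ
  have hsplit : Q b c - Q (a*b) c + (∑ j ∈ Finset.range (nv c), F (a, b*σ^j, σ))
      - (∑ j ∈ Finset.range (nv c), F (a,b,σ^j*σ))
      + (∑ j ∈ Finset.range (nv c), F (a,b,σ^j)) = 0 := by
    rw [hQ, ← h0, Finset.sum_add_distrib, Finset.sum_sub_distrib,
      Finset.sum_add_distrib, Finset.sum_sub_distrib]
  have h1 : (∑ j ∈ Finset.range (nv c), F (a, b*σ^j, σ)) = Q a (b*c) - Q a b := by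
    have := partial_shift (fun j => F (a, σ^j, σ))
      (fun j => by rw [σ_pow_period]) b c
    have hz : (if M ≤ nv b + nv c then ∑ j ∈ Finset.range M, F (a, σ^j, σ) else 0)
        = 0 := by
      have : (∑ j ∈ Finset.range M, F (a, σ^j, σ)) = 0 := hSa a
      rw [this, ite_self]
    rw [hz, add_zero] at this
    calc ∑ j ∈ Finset.range (nv c), F (a, b*σ^j, σ)
        = ∑ j ∈ Finset.range (nv c), F (a, σ^(nv b + j), σ) := by
          apply Finset.sum_congr rfl; intro j _; rw [pow_add, σ_pow_nv]
      _ = Q a (b*c) - Q a b := this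
  have h2 : (∑ j ∈ Finset.range (nv c), F (a,b,σ^j*σ))
      - (∑ j ∈ Finset.range (nv c), F (a,b,σ^j)) = F (a,b,c) - F (a,b,1) := by
    rw [← Finset.sum_sub_distrib]
    have := sum_telescope (fun j => F (a,b,σ^j)) (nv c)
    calc ∑ j ∈ Finset.range (nv c), (F (a,b,σ^j*σ) - F (a,b,σ^j))
        = ∑ j ∈ Finset.range (nv c), (F (a,b,σ^(j+1)) - F (a,b,σ^j)) := by
          apply Finset.sum_congr rfl; intro j _; rw [pow_succ]
      _ = F (a,b,σ^(nv c)) - F (a,b,σ^0) := this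
      _ = F (a,b,c) - F (a,b,1) := by rw [σ_pow_nv, pow_zero]
  have h3 : F (a,b,1) = F (a*b,1,1) - F (b,1,1) := by
    have := hF a b 1 1
    rw [mul_one, mul_one] at this
    refine eq_of_sub_eq_zero ?_
    calc F (a,b,1) - (F (a*b,1,1) - F (b,1,1))
        = F (b,1,1) - F (a*b,1,1) + F (a,b,1) - F (a,b,1) + F (a,b,1) := by abel
      _ = 0 := this
  refine eq_of_sub_eq_zero ?_
  calc Q b c - F (b,1,1) - (Q (a*b) c - F (a*b,1,1))
      + (Q a (b*c) - F (a,1,1)) - (Q a b - F (a,1,1)) - F (a,b,c)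
      = (Q b c - Q (a*b) c + (Q a (b*c) - Q a b)
          - (F (a,b,c) - F (a,b,1)))
        + (F (a*b,1,1) - F (b,1,1) - F (a,b,1)) := by abel
    _ = 0 := by
        rw [← h1, ← h2]
        rw [h3]
        have : Q b c - Q (a*b) c
            + (∑ j ∈ Finset.range (nv c), F (a, b*σ^j, σ))
            - ((∑ j ∈ Finset.range (nv c), F (a,b,σ^j*σ))
              - (∑ j ∈ Finset.range (nv c), F (a,b,σ^j))) = 0 := by
          rw [← hsplit]; abel
        rw [show F (a*b,1,1) - F (b,1,1) - (F (a*b,1,1) - F (b,1,1)) = 0 by abel]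
        rw [add_zero]
        exact this

end std

end cyc


namespace glue
open groupCohomology myH3 cyc CategoryTheory

variable {M : ℕ} [NeZero M] {V : Type} [AddCommGroup V]

abbrev AV (M : ℕ) (V : Type) [AddCommGroup V] : Rep ℤ (Gc M) := Rep.trivial ℤ (Gc M) V

def tors (M : ℕ) (V : Type) [AddCommGroup V] : Submodule ℤ V where
  carrier := {v | (M : ℤ) • v = 0}
  zero_mem' := smul_zero _
  add_mem' := fun {a b} ha hb => by
    simp only [Set.mem_setOf_eq, smul_add] at *
    rw [ha, hb, add_zero]
  smul_mem' := fun z v hv => by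
    simp only [Set.mem_setOf_eq] at *
    rw [smul_comm, hv, smul_zero]

lemma mem_tors {v : V} : v ∈ tors M V ↔ (M : ℤ) • v = 0 := Iff.rfl

lemma isCoc_of_ker {f : Gc M × Gc M × Gc M → AV M V}
    (hf : dThree (AV M V) f = 0) : IsCoc (W := V) f :=
  fun a b c e => congr_fun hf (a, b, c, e)

lemma ker_of_isCoc {f : Gc M × Gc M × Gc M → AV M V}
    (hf : IsCoc (W := V) f) : dThree (AV M V) f = 0 := by
  funext t
  obtain ⟨a, b, c, e⟩ := t
  exact hf a b c e

lemma dTwo_eq_d2 (P : Gc M × Gc M → AV M V) : (d₂₃ (AV M V)).hom P = d2 (W := V) P := rfl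

def Phi : (LinearMap.ker (dThree (AV M V))) →ₗ[ℤ] tors M V where
  toFun f := ⟨Sf (W := V) f.1 σ, by
    show (M : ℤ) • Sf (W := V) f.1 σ = 0
    exact (natCast_zsmul _ M).trans (Sf_torsion (isCoc_of_ker f.2))⟩
  map_add' f g := Subtype.ext (by
    show Sf (W := V) (f.1 + g.1) σ = Sf (W := V) f.1 σ + Sf (W := V) g.1 σ
    rw [Sf, Sf, Sf, ← Finset.sum_add_distrib]
    rfl)
  map_smul' z f := Subtype.ext (by
    show Sf (W := V) (z • f.1) σ = z • Sf (W := V) f.1 σ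
    rw [Sf, Sf, Finset.smul_sum]
    rfl)

lemma ker_Phi : LinearMap.ker (Phi (M := M) (V := V))
    = LinearMap.range (shortComplexH3 (AV M V)).moduleCatToCycles := by
  ext f
  change Phi (M := M) (V := V) f = 0 ↔ ∃ P, (shortComplexH3 (AV M V)).moduleCatToCycles P = f
  constructor
  · intro hf
    have hS : Sf (W := V) f.1 σ = 0 := congrArg Subtype.val hf
    obtain ⟨P, hP⟩ := exists_d2 (isCoc_of_ker f.2) hS
    exact ⟨P, Subtype.ext hP⟩
  · rintro ⟨P, rfl⟩
    exact Subtype.ext (Sf_d2 (W := V) P)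

lemma Phi_surj : Function.Surjective (Phi (M := M) (V := V)) := by
  rintro ⟨a, ha⟩
  have ha' : (M : ℤ) • a = 0 := ha
  refine ⟨⟨stdc (M := M) a, ?_⟩, ?_⟩
  · rw [LinearMap.mem_ker]
    exact ker_of_isCoc (stdc_isCoc ha')
  · exact Subtype.ext (stdc_Sf ha')

def quotEquivTors : ((LinearMap.ker (dThree (AV M V))) ⧸
    LinearMap.range (shortComplexH3 (AV M V)).moduleCatToCycles) ≃ₗ[ℤ] tors M V :=
  (Submodule.quotEquivOfEq (LinearMap.range (shortComplexH3 (AV M V)).moduleCatToCycles)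
      (LinearMap.ker (Phi (M := M) (V := V))) (ker_Phi (M := M) (V := V)).symm).trans
    ((Phi (M := M) (V := V)).quotKerEquivOfSurjective Phi_surj)

/-- `H³` of the trivial rep is the `M`-torsion of `V`. -/
def h3AddEquiv : (groupCohomology (AV M V) 3) ≃+ tors M V :=
  (modCatIsoToAddEquiv (isoH3 (AV M V))).trans
    (quotEquivTors (M := M) (V := V)).toAddEquiv

end glue

section units
variable {k : Type} [Field k] [IsAlgClosed k] [CharZero k] (M : ℕ) [NeZero M]

noncomputable def torsUnitsEquiv : glue.tors M (Additive kˣ) ≃+ ZMod M := by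
  haveI : NeZero ((M : k)) := ⟨Nat.cast_ne_zero.mpr (NeZero.ne M)⟩
  obtain ⟨ζ, hζ⟩ := Classical.indefiniteDescription _
    (HasEnoughRootsOfUnity.exists_primitiveRoot k M)
  have hu : IsPrimitiveRoot (hζ.isUnit (NeZero.ne M)).unit M := IsPrimitiveRoot.isUnit_unit (NeZero.ne M) hζ
  have hzp : Subgroup.zpowers (hζ.isUnit (NeZero.ne M)).unit = rootsOfUnity M k :=
    hu.zpowers_eq
  have e1 : ZMod M ≃+ Additive (Subgroup.zpowers (hζ.isUnit (NeZero.ne M)).unit) :=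
    hu.zmodEquivZPowers
  have e2 : glue.tors M (Additive kˣ)
      ≃+ Additive (Subgroup.zpowers (hζ.isUnit (NeZero.ne M)).unit) := by
    rw [hzp]
    exact
    { toFun := fun v => Additive.ofMul (⟨Additive.toMul v.1, by
        rw [mem_rootsOfUnity]
        have hv : (M : ℤ) • v.1 = 0 := v.2
        have h2 : Additive.toMul v.1 ^ ((M : ℕ) : ℤ) = 1 := by
          rw [← toMul_zsmul, hv]
          rfl
        rw [zpow_natCast] at h2
        exact h2⟩ : rootsOfUnity M k)
      invFun := fun x => ⟨Additive.ofMul ((Additive.toMul x : rootsOfUnity M k) : kˣ), by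
        show (M : ℤ) • Additive.ofMul ((Additive.toMul x : rootsOfUnity M k) : kˣ) = 0
        have hx : ((Additive.toMul x : rootsOfUnity M k) : kˣ) ^ M = 1 :=
          (mem_rootsOfUnity _ _).mp (Additive.toMul x).2
        have : Additive.ofMul (((Additive.toMul x : rootsOfUnity M k) : kˣ) ^ (M : ℤ)) =
            Additive.ofMul (1 : kˣ) := by rw [zpow_natCast, hx]
        simpa [← ofMul_zpow] using this⟩
      left_inv := fun v => rfl
      right_inv := fun x => rfl
      map_add' := fun v w => rfl }
  exact e2.trans e1.symm

end units

theorem third_cohomology_of_cyclic_group_with_units_coeffs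
    {k : Type} [Field k] [IsAlgClosed k] [CharZero k]
    (M : ℕ) (hM : 1 ≤ M) :
    Nonempty
      ((groupCohomology
          (Rep.trivial ℤ (Multiplicative (ZMod M)) (Additive kˣ)) 3) ≃+ ZMod M) := by
  haveI : NeZero M := ⟨by omega⟩
  exact ⟨(glue.h3AddEquiv (M := M) (V := Additive kˣ)).trans (torsUnitsEquiv M)⟩
end
end

section
/- Let M ≥ 1 and let ξ ∈ kˣ satisfy ξ^{M²} = 1 and ξ^{2M} = 1. Define σ_ξ : (ZMod M)² → kˣ by σ_ξ(a,b) = ξ^{ā·b̄}. Then the pair (ω_{ξ^M}, σ_ξ) satisfies the abelian 3-cocycle identity: ω_{ξ^M}(a,b,c)·ω_{ξ^M}(b,c,a)·σ_ξ(a, b+c) = ω_{ξ^M}(b,a,c)·σ_ξ(a,b)·σ_ξ(a,c) for all a,b,c ∈ ZMod M. -/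
/-- The 2-cochain `σ_ξ(a,b) = ξ^(ā·b̄)` on `ZMod M`. -/
def sigmaXi {k : Type*} [Field k] (M : ℕ) (ξ : kˣ) (a b : ZMod M) : kˣ :=
  ξ ^ (a.val * b.val)

theorem abelian_three_cocycle_identity
    {k : Type*} [Field k] [IsAlgClosed k] [CharZero k]
    (M : ℕ) (hM : 1 ≤ M) (ξ : kˣ) (hξ1 : ξ ^ (M ^ 2) = 1) (hξ2 : ξ ^ (2 * M) = 1) :
    ∀ a b c : ZMod M,
      omegaZeta M (ξ ^ M) a b c * omegaZeta M (ξ ^ M) b c a * sigmaXi M ξ a (b + c) =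
        omegaZeta M (ξ ^ M) b a c * sigmaXi M ξ a b * sigmaXi M ξ a c := by
  intro a b c
  haveI : NeZero M := ⟨Nat.one_le_iff_ne_zero.mp hM⟩
  have hb := ZMod.val_lt b
  have hc := ZMod.val_lt c
  simp only [omegaZeta, sigmaXi, ZMod.val_add]
  rw [Nat.add_comm c.val a.val]
  by_cases h : M ≤ b.val + c.val
  · have hmod : (b.val + c.val) % M = b.val + c.val - M := by
      rw [Nat.mod_eq_sub_mod h, Nat.mod_eq_of_lt (by omega)]
    rw [hmod, if_pos h]
    by_cases h2 : M ≤ a.val + c.val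
    · rw [if_pos h2]
      simp only [← pow_mul, ← pow_add]
      congr 1
      zify [h]
      ring
    · rw [if_neg h2]
      simp only [← pow_mul, ← pow_add, one_mul, mul_one]
      congr 1
      zify [h]
      ring
  · have hmod : (b.val + c.val) % M = b.val + c.val := Nat.mod_eq_of_lt (by omega)
    rw [hmod, if_neg h]
    by_cases h2 : M ≤ a.val + c.val
    · rw [if_pos h2]
      simp only [← pow_mul, ← pow_add, one_mul, mul_one]
      congr 1
      ring
    · rw [if_neg h2]
      simp only [← pow_mul, ← pow_add, one_mul, mul_one]
      congr 1
      ring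
end

section
/- Let M ≥ 1, let d = gcd(M², 2M) (so d = M if M is odd and d = 2M if M is even), and let q : ZMod M → kˣ be a quadratic form on ZMod M with values in kˣ. Then there exists a unique ξ ∈ kˣ with ξ^d = 1 such that q(a) = ξ^{ā²} for all a ∈ ZMod M. (Thus quadratic forms on ℤ/Mℤ with values in kˣ are in bijection with the d-th roots of unity in k.) -/
private lemma aux_mul_inv_inv {G : Type*} [CommGroup G] {a b c d : G}
    (h : a * b⁻¹ * c⁻¹ = d) : a = d * b * c := by
  rw [← h]
  simp [mul_assoc, mul_comm, mul_left_comm]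

theorem quadratic_form_on_zmod_classified
    {k : Type*} [Field k] [IsAlgClosed k] [CharZero k]
    (M : ℕ) (hM : 1 ≤ M) (q : ZMod M → kˣ)
    (hq_neg : ∀ a : ZMod M, q (-a) = q a)
    (hq_symm : ∀ a b : ZMod M,
      q (a + b) * (q a)⁻¹ * (q b)⁻¹ = q (b + a) * (q b)⁻¹ * (q a)⁻¹)
    (hq_add_left : ∀ a a' b : ZMod M,
      q (a + a' + b) * (q (a + a'))⁻¹ * (q b)⁻¹ =
        (q (a + b) * (q a)⁻¹ * (q b)⁻¹) * (q (a' + b) * (q a')⁻¹ * (q b)⁻¹))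
    (hq_add_right : ∀ a b b' : ZMod M,
      q (a + (b + b')) * (q a)⁻¹ * (q (b + b'))⁻¹ =
        (q (a + b) * (q a)⁻¹ * (q b)⁻¹) * (q (a + b') * (q a)⁻¹ * (q b')⁻¹)) :
    ∃! ξ : kˣ, ξ ^ (Nat.gcd (M ^ 2) (2 * M)) = 1 ∧
      ∀ a : ZMod M, q a = ξ ^ (a.val ^ 2) := by
  haveI : NeZero M := ⟨by omega⟩
  have q0 : q 0 = 1 := by
    have h := hq_add_right 0 0 0
    simp only [add_zero, zero_add] at h
    have h2 : (1 : kˣ) = q 0 * (q 0)⁻¹ * (q 0)⁻¹ :=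
      mul_left_cancel (a := q 0 * (q 0)⁻¹ * (q 0)⁻¹) (by rw [mul_one]; exact h)
    have h3 : (1 : kˣ) = (q 0)⁻¹ := by rw [h2]; group
    rw [← inv_inv (q 0), ← h3, inv_one]
  have b11 : q (1 + 1 : ZMod M) * (q 1)⁻¹ * (q 1)⁻¹ = q 1 ^ 2 := by
    have h := hq_add_right 1 1 (-1)
    rw [add_neg_cancel, add_zero, hq_neg, q0] at h
    have h' : q (1 + 1 : ZMod M) * (q 1)⁻¹ * (q 1)⁻¹ = q 1 * q 1 := by
      rw [← mul_right_cancel_iff (a := (1 : kˣ) * (q 1)⁻¹ * (q 1)⁻¹), ← h]; group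
    rw [h', sq]
  have key : ∀ n : ℕ, q ((n : ZMod M)) = q 1 ^ (n ^ 2) ∧
      q ((n : ZMod M) + 1) * (q ((n : ZMod M)))⁻¹ * (q 1)⁻¹ = q 1 ^ (2 * n) := by
    intro n
    induction n with
    | zero =>
      constructor
      · simp [q0]
      · simp only [Nat.cast_zero, zero_add, q0, mul_zero, pow_zero]
        group
    | succ n ih =>
      obtain ⟨ih1, ih2⟩ := ih
      have hc : ((n + 1 : ℕ) : ZMod M) = (n : ZMod M) + 1 := by push_cast; ring
      have e1 : q ((n : ZMod M) + 1) = q 1 ^ ((n + 1) ^ 2) := by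
        have h : q ((n : ZMod M) + 1) = q 1 ^ (2 * n) * q ((n : ZMod M)) * q 1 :=
          aux_mul_inv_inv ih2
        rw [h, ih1, ← pow_add, ← pow_succ]
        congr 1
        ring
      constructor
      · rw [hc]; exact e1
      · rw [hc]
        have h := hq_add_left (n : ZMod M) 1 1
        rw [h, ih2, b11, ← pow_add]
        congr 1
  have hM2 : q 1 ^ (M ^ 2) = 1 := by
    have h := (key M).1
    rw [ZMod.natCast_self, q0] at h
    exact h.symm
  have h2M : q 1 ^ (2 * M) = 1 := by
    have h := (key M).2
    rw [ZMod.natCast_self, zero_add, q0] at h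
    rw [← h]; group
  have hgcd : q 1 ^ (Nat.gcd (M ^ 2) (2 * M)) = 1 :=
    orderOf_dvd_iff_pow_eq_one.mp
      (Nat.dvd_gcd (orderOf_dvd_of_pow_eq_one hM2) (orderOf_dvd_of_pow_eq_one h2M))
  refine ⟨q 1, ⟨hgcd, ?_⟩, ?_⟩
  · intro a
    have h := (key a.val).1
    rwa [ZMod.natCast_rightInverse a] at h
  · rintro ξ' ⟨h1, h2⟩
    rcases eq_or_lt_of_le hM with hM1 | hM1
    · have hg : Nat.gcd (M ^ 2) (2 * M) = 1 := by subst hM1; norm_num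
      rw [hg, pow_one] at h1
      have h10 : (1 : ZMod M) = 0 := by
        have : Subsingleton (ZMod M) := by rw [← hM1]; infer_instance
        exact Subsingleton.elim _ _
      rw [h1, h10, q0]
    · haveI : Fact (1 < M) := ⟨hM1⟩
      have h := h2 1
      rw [ZMod.val_one, one_pow, pow_one] at h
      exact h.symm
end

section
/- Let M ≥ 2 be even and let ζ ∈ kˣ with ζ^M = 1. Let ι : ZMod (M/2) → ZMod M be the group homomorphism sending a to 2ā (doubling of the canonical representative). Then for all a,b,c ∈ ZMod (M/2), one has ω_ζ(ι(a), ι(b), ι(c)) = ω_{ζ²}(a,b,c), where on the left ω_ζ is the 3-cocycle on ZMod M attached to ζ and on the right ω_{ζ²} is the 3-cocycle on ZMod (M/2) attached to ζ². (Thus the restriction of ω_ζ to the index-2 subgroup of ℤ_M is the cocycle attached to ζ².) -/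
theorem omegaZeta_restriction_to_index_two_subgroup
    {k : Type*} [Field k] [IsAlgClosed k] [CharZero k]
    (M : ℕ) (hM : 2 ≤ M) (hMeven : Even M) (ζ : kˣ) (hζ : ζ ^ M = 1) :
    let ι : ZMod (M / 2) → ZMod M := fun a => (2 * a.val : ZMod M)
    ∀ a b c : ZMod (M / 2),
      omegaZeta M ζ (ι a) (ι b) (ι c) = omegaZeta (M / 2) (ζ ^ 2) a b c := by
  intro ι a b c
  have hM0 : 0 < M := by omega
  have hM2 : 0 < M / 2 := by omega
  haveI : NeZero M := ⟨hM0.ne'⟩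
  haveI : NeZero (M / 2) := ⟨hM2.ne'⟩
  have hval : ∀ x : ZMod (M / 2), (ι x).val = 2 * x.val := by
    intro x
    have hx : x.val < M / 2 := x.val_lt
    have h2x : 2 * x.val < M := by omega
    simp only [ι]
    rw [show ((2 * x.val : ZMod M)) = ((2 * x.val : ℕ) : ZMod M) by push_cast; ring,
      ZMod.val_cast_of_lt h2x]
  have hiff : M ≤ (ι b).val + (ι c).val ↔ M / 2 ≤ b.val + c.val := by
    rw [hval, hval]
    obtain ⟨m, hm⟩ := hMeven
    omega
  unfold omegaZeta
  rw [hval a, hval b, hval c]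
  obtain ⟨m, hm⟩ := hMeven
  by_cases h : M / 2 ≤ b.val + c.val
  · rw [if_pos (by omega), if_pos h, pow_mul]
  · rw [if_neg (by omega), if_neg h]
end
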